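/- Let (Ω, 𝓕, ℙ) be a probability space, (𝓕_ℓ)_{ℓ≥0} a filtration, and (ξ_ℓ)_{ℓ≥1} a sequence of non-negative random variables such that ξ_ℓ is 𝓕_ℓ-measurable for each ℓ. Let p ∈ ℕ, p ≥ 1, and N ∈ ℕ, and assume all the expectations below are finite and that the conditional expectations E[ξ_ℓ^{2p} | 𝓕_{ℓ-1}] are almost surely strictly positive. Then E[ ∏_{ℓ=1}^{N} ξ_ℓ^{p} ] ≤ ( E[ ∏_{ℓ=1}^{N} E[ ξ_ℓ^{2p} | 𝓕_{ℓ-1} ] ] )^{1/2}. -/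

import Mathlib

open MeasureTheory

/-- Tower-type identity in `ℝ≥0∞`: for `Y` an `m`-measurable `ℝ≥0∞`-valued function and
`X` a nonnegative integrable function, `∫⁻ Y · X = ∫⁻ Y · E[X|m]`. -/
lemma lintegral_mul_condexp_aux {Ω : Type*} {m m0 : MeasurableSpace Ω} (hm : m ≤ m0)
    (μ : Measure Ω) [IsFiniteMeasure μ] {X : Ω → ℝ} (hXm : Measurable X)
    (hXint : Integrable X μ) (hX0 : 0 ≤ᵐ[μ] X) {Y : Ω → ENNReal}
    (hY : Measurable[m] Y) :
    ∫⁻ ω, Y ω * ENNReal.ofReal (X ω) ∂μ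
      = ∫⁻ ω, Y ω * ENNReal.ofReal ((μ[X|m]) ω) ∂μ := by
  haveI : SigmaFinite (μ.trim hm) := inferInstance
  have hCm : Measurable (fun ω => ENNReal.ofReal ((μ[X|m]) ω)) :=
    ENNReal.measurable_ofReal.comp ((stronglyMeasurable_condExp.measurable).mono hm le_rfl)
  have hXm' : Measurable (fun ω => ENNReal.ofReal (X ω)) := ENNReal.measurable_ofReal.comp hXm
  have hCm' : Measurable[m] (fun ω => ENNReal.ofReal ((μ[X|m]) ω)) :=
    ENNReal.measurable_ofReal.comp stronglyMeasurable_condExp.measurable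
  have key : (μ.withDensity fun ω => ENNReal.ofReal (X ω)).trim hm
      = (μ.withDensity fun ω => ENNReal.ofReal ((μ[X|m]) ω)).trim hm := by
    refine @Measure.ext Ω m _ _ fun s hs => ?_
    rw [trim_measurableSet_eq hm hs, trim_measurableSet_eq hm hs,
      withDensity_apply _ (hm s hs), withDensity_apply _ (hm s hs),
      ← ofReal_integral_eq_lintegral_ofReal hXint.integrableOn (ae_restrict_of_ae hX0),
      ← ofReal_integral_eq_lintegral_ofReal integrable_condExp.integrableOn
        (ae_restrict_of_ae (condExp_nonneg hX0)),
      setIntegral_condExp hm hXint hs]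
  calc ∫⁻ ω, Y ω * ENNReal.ofReal (X ω) ∂μ
      = ∫⁻ ω, Y ω ∂(μ.withDensity fun ω => ENNReal.ofReal (X ω)) := by
        rw [lintegral_withDensity_eq_lintegral_mul μ hXm' (hY.mono hm le_rfl)]
        simp only [Pi.mul_apply, mul_comm]
    _ = ∫⁻ ω, Y ω ∂((μ.withDensity fun ω => ENNReal.ofReal (X ω)).trim hm) :=
        (lintegral_trim hm hY).symm
    _ = ∫⁻ ω, Y ω ∂((μ.withDensity fun ω => ENNReal.ofReal ((μ[X|m]) ω)).trim hm) := by
        rw [key]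
    _ = ∫⁻ ω, Y ω ∂(μ.withDensity fun ω => ENNReal.ofReal ((μ[X|m]) ω)) :=
        lintegral_trim hm hY
    _ = ∫⁻ ω, Y ω * ENNReal.ofReal ((μ[X|m]) ω) ∂μ := by
        rw [lintegral_withDensity_eq_lintegral_mul μ hCm (hY.mono hm le_rfl)]
        simp only [Pi.mul_apply, mul_comm]

/-- Let `(𝓕_ℓ)` be a filtration and `(ξ_ℓ)_{ℓ≥1}` non-negative random
variables with `ξ_ℓ` being `𝓕_ℓ`-measurable. If the relevant expectations are finite and
the conditional expectations `E[ξ_ℓ^{2p} | 𝓕_{ℓ-1}]` are a.s. positive, then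
`E[∏_{ℓ=1}^N ξ_ℓ^p] ≤ (E[∏_{ℓ=1}^N E[ξ_ℓ^{2p} | 𝓕_{ℓ-1}]])^{1/2}`. -/
theorem product_conditional_cauchy_schwarz {Ω : Type*} {m : MeasurableSpace Ω}
    (μ : Measure Ω) [IsProbabilityMeasure μ]
    (ℱ : Filtration ℕ m) (ξ : ℕ → Ω → ℝ)
    (hξ_nonneg : ∀ ℓ ω, 0 ≤ ξ ℓ ω)
    (hξ_meas : ∀ ℓ, 1 ≤ ℓ → Measurable[ℱ ℓ] (ξ ℓ))
    (p : ℕ) (hp : 1 ≤ p) (N : ℕ)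
    (hint₁ : Integrable (fun ω => ∏ ℓ ∈ Finset.Icc 1 N, ξ ℓ ω ^ p) μ)
    (hint₂ : ∀ ℓ, 1 ≤ ℓ → ℓ ≤ N → Integrable (fun ω => ξ ℓ ω ^ (2 * p)) μ)
    (hint₃ : Integrable
      (fun ω => ∏ ℓ ∈ Finset.Icc 1 N, (μ[fun ω' => ξ ℓ ω' ^ (2 * p)|ℱ (ℓ - 1)]) ω) μ)
    (hpos : ∀ ℓ, 1 ≤ ℓ → ℓ ≤ N →
      ∀ᵐ ω ∂μ, 0 < (μ[fun ω' => ξ ℓ ω' ^ (2 * p)|ℱ (ℓ - 1)]) ω) :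
    ∫ ω, ∏ ℓ ∈ Finset.Icc 1 N, ξ ℓ ω ^ p ∂μ ≤
      Real.sqrt
        (∫ ω, ∏ ℓ ∈ Finset.Icc 1 N, (μ[fun ω' => ξ ℓ ω' ^ (2 * p)|ℱ (ℓ - 1)]) ω ∂μ) := by
  classical
  -- notation
  set c : ℕ → Ω → ℝ := fun ℓ => μ[fun ω' => ξ ℓ ω' ^ (2 * p)|ℱ (ℓ - 1)] with hc
  set d : ℕ → Ω → ENNReal := fun ℓ ω => ENNReal.ofReal (c ℓ ω) with hd
  have hdm : ∀ ℓ, Measurable[ℱ (ℓ - 1)] (d ℓ) := fun ℓ =>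
    ENNReal.measurable_ofReal.comp stronglyMeasurable_condExp.measurable
  have hdm' : ∀ ℓ, Measurable (d ℓ) := fun ℓ => (hdm ℓ).mono (ℱ.le _) le_rfl
  have hξm : ∀ ℓ, 1 ≤ ℓ → Measurable (ξ ℓ) := fun ℓ hℓ => (hξ_meas ℓ hℓ).mono (ℱ.le _) le_rfl
  have hdne : ∀ ℓ ω, d ℓ ω ≠ ⊤ := fun ℓ ω => ENNReal.ofReal_ne_top
  -- the key supermartingale-type estimate
  have hI : ∀ n, n ≤ N →
      ∫⁻ ω, ∏ ℓ ∈ Finset.Icc 1 n,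
        (ENNReal.ofReal (ξ ℓ ω ^ (2 * p)) * (d ℓ ω)⁻¹) ∂μ ≤ 1 := by
    intro n
    induction n with
    | zero =>
      intro _
      simp
    | succ n ih =>
      intro hn
      have hn' : n ≤ N := Nat.le_of_succ_le hn
      -- the measurable multiplier
      set Y : Ω → ENNReal := fun ω =>
        (∏ ℓ ∈ Finset.Icc 1 n, (ENNReal.ofReal (ξ ℓ ω ^ (2 * p)) * (d ℓ ω)⁻¹))
          * (d (n + 1) ω)⁻¹ with hY
      have hYm : Measurable[ℱ n] Y := by
        apply Measurable.mul
        · apply Finset.measurable_prod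
          intro ℓ hℓ
          rw [Finset.mem_Icc] at hℓ
          apply Measurable.mul
          · exact (ENNReal.measurable_ofReal.comp
              (((hξ_meas ℓ hℓ.1).mono (ℱ.mono hℓ.2) le_rfl).pow_const _))
          · exact ((hdm ℓ).mono (ℱ.mono (le_trans (Nat.sub_le ℓ 1) hℓ.2)) le_rfl).inv
        · have : Measurable[ℱ (n + 1 - 1)] (d (n + 1)) := hdm (n + 1)
          exact (by simpa using this : Measurable[ℱ n] (d (n + 1))).inv
      have hXm : Measurable (fun ω => ξ (n + 1) ω ^ (2 * p)) :=
        (hξm (n + 1) (Nat.le_add_left 1 n)).pow_const _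
      have hXint : Integrable (fun ω => ξ (n + 1) ω ^ (2 * p)) μ :=
        hint₂ (n + 1) (Nat.le_add_left 1 n) hn
      have hX0 : 0 ≤ᵐ[μ] fun ω => ξ (n + 1) ω ^ (2 * p) :=
        Filter.Eventually.of_forall fun ω => pow_nonneg (hξ_nonneg _ _) _
      have step := lintegral_mul_condexp_aux (ℱ.le n) μ hXm hXint hX0 hYm
      have hsplit : ∀ ω, ∏ ℓ ∈ Finset.Icc 1 (n + 1),
          (ENNReal.ofReal (ξ ℓ ω ^ (2 * p)) * (d ℓ ω)⁻¹)
          = Y ω * ENNReal.ofReal (ξ (n + 1) ω ^ (2 * p)) := by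
        intro ω
        rw [Finset.prod_Icc_succ_top (Nat.le_add_left 1 n), hY]
        ring
      have hcondeq : ∀ ω, ENNReal.ofReal
            ((μ[fun ω' => ξ (n + 1) ω' ^ (2 * p)|ℱ n]) ω) = d (n + 1) ω := by
        intro ω; simp [hd, hc]
      calc ∫⁻ ω, ∏ ℓ ∈ Finset.Icc 1 (n + 1),
            (ENNReal.ofReal (ξ ℓ ω ^ (2 * p)) * (d ℓ ω)⁻¹) ∂μ
          = ∫⁻ ω, Y ω * ENNReal.ofReal (ξ (n + 1) ω ^ (2 * p)) ∂μ := by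
            exact lintegral_congr fun ω => hsplit ω
        _ = ∫⁻ ω, Y ω * d (n + 1) ω ∂μ := by
            rw [step]; exact lintegral_congr fun ω => by rw [hcondeq ω]
        _ = ∫⁻ ω, ∏ ℓ ∈ Finset.Icc 1 n,
            (ENNReal.ofReal (ξ ℓ ω ^ (2 * p)) * (d ℓ ω)⁻¹) ∂μ := by
            refine lintegral_congr_ae ?_
            filter_upwards [hpos (n + 1) (Nat.le_add_left 1 n) hn] with ω hω
            have hne0 : d (n + 1) ω ≠ 0 := by
              simp only [hd, ne_eq, ENNReal.ofReal_eq_zero, not_le]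
              simpa [hc] using hω
            rw [hY, mul_assoc, ENNReal.inv_mul_cancel hne0 (hdne _ _), mul_one]
        _ ≤ 1 := ih hn'
  -- Cauchy–Schwarz setup in ℝ≥0∞
  set f : Ω → ENNReal := fun ω => ∏ ℓ ∈ Finset.Icc 1 N,
      (ENNReal.ofReal (ξ ℓ ω ^ p) * ((d ℓ ω ^ ((1 : ℝ) / 2))⁻¹)) with hf
  set g : Ω → ENNReal := fun ω => ∏ ℓ ∈ Finset.Icc 1 N, d ℓ ω ^ ((1 : ℝ) / 2) with hg
  have hfm : Measurable f := by
    apply Finset.measurable_prod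
    intro ℓ hℓ
    rw [Finset.mem_Icc] at hℓ
    exact ((ENNReal.measurable_ofReal.comp ((hξm ℓ hℓ.1).pow_const _)).mul
      (((hdm' ℓ).pow_const _).inv))
  have hgm : Measurable g := by
    apply Finset.measurable_prod
    intro ℓ hℓ
    exact (hdm' ℓ).pow_const _
  -- a.e. positivity of all the d ℓ, ℓ ∈ Icc 1 N
  have hdpos : ∀ᵐ ω ∂μ, ∀ ℓ ∈ Finset.Icc 1 N, 0 < d ℓ ω := by
    rw [Filter.eventually_all_finset]
    intro ℓ hℓ
    rw [Finset.mem_Icc] at hℓ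
    filter_upwards [hpos ℓ hℓ.1 hℓ.2] with ω hω
    simpa [hd, hc, ENNReal.ofReal_pos] using hω
  -- f * g = product of ofReal (ξ^p) a.e.
  have hfg : (fun ω => (f * g) ω) =ᵐ[μ]
      fun ω => ∏ ℓ ∈ Finset.Icc 1 N, ENNReal.ofReal (ξ ℓ ω ^ p) := by
    filter_upwards [hdpos] with ω hω
    simp only [Pi.mul_apply, hf, hg, ← Finset.prod_mul_distrib]
    refine Finset.prod_congr rfl fun ℓ hℓ => ?_
    have h1 : d ℓ ω ^ ((1 : ℝ) / 2) ≠ 0 := (ENNReal.rpow_pos (hω ℓ hℓ) (hdne ℓ ω)).ne'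
    have h2 : d ℓ ω ^ ((1 : ℝ) / 2) ≠ ⊤ :=
      (ENNReal.rpow_lt_top_of_nonneg (by norm_num) (hdne ℓ ω)).ne
    rw [mul_assoc, ENNReal.inv_mul_cancel h1 h2, mul_one]
  -- f ^ 2 pointwise
  have hf2 : ∀ ω, f ω ^ (2 : ℝ) = ∏ ℓ ∈ Finset.Icc 1 N,
      (ENNReal.ofReal (ξ ℓ ω ^ (2 * p)) * (d ℓ ω)⁻¹) := by
    intro ω
    have : f ω ^ (2 : ℝ) = f ω ^ (2 : ℕ) := by
      rw [← ENNReal.rpow_natCast]; norm_num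
    rw [this, hf, ← Finset.prod_pow]
    refine Finset.prod_congr rfl fun ℓ hℓ => ?_
    rw [mul_pow, ← ENNReal.inv_pow, ← ENNReal.rpow_natCast (d ℓ ω ^ ((1:ℝ)/2)) 2,
      ← ENNReal.rpow_mul]
    norm_num
    rw [← ENNReal.ofReal_pow (pow_nonneg (hξ_nonneg ℓ ω) p), ← pow_mul, mul_comm p 2]
  -- g ^ 2 pointwise
  have hg2 : ∀ ω, g ω ^ (2 : ℝ) = ∏ ℓ ∈ Finset.Icc 1 N, d ℓ ω := by
    intro ω
    have : g ω ^ (2 : ℝ) = g ω ^ (2 : ℕ) := by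
      rw [← ENNReal.rpow_natCast]; norm_num
    rw [this, hg, ← Finset.prod_pow]
    refine Finset.prod_congr rfl fun ℓ hℓ => ?_
    rw [← ENNReal.rpow_natCast (d ℓ ω ^ ((1:ℝ)/2)) 2, ← ENNReal.rpow_mul]
    norm_num
  have hconj : Real.HolderConjugate 2 2 := by
    exact Real.HolderConjugate.two_two
  have hCS := ENNReal.lintegral_mul_le_Lp_mul_Lq μ hconj hfm.aemeasurable hgm.aemeasurable
  -- rewrite the three lintegrals
  have hCS' : ∫⁻ ω, ∏ ℓ ∈ Finset.Icc 1 N, ENNReal.ofReal (ξ ℓ ω ^ p) ∂μ ≤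
      (∫⁻ ω, ∏ ℓ ∈ Finset.Icc 1 N, d ℓ ω ∂μ) ^ ((1 : ℝ) / 2) := by
    rw [← lintegral_congr_ae hfg]
    refine le_trans hCS ?_
    rw [show (fun a => f a ^ (2 : ℝ)) = fun ω => ∏ ℓ ∈ Finset.Icc 1 N,
        (ENNReal.ofReal (ξ ℓ ω ^ (2 * p)) * (d ℓ ω)⁻¹) from funext hf2,
      show (fun a => g a ^ (2 : ℝ)) = fun ω => ∏ ℓ ∈ Finset.Icc 1 N, d ℓ ω from funext hg2]
    calc (∫⁻ ω, ∏ ℓ ∈ Finset.Icc 1 N,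
          (ENNReal.ofReal (ξ ℓ ω ^ (2 * p)) * (d ℓ ω)⁻¹) ∂μ) ^ ((1:ℝ)/2) *
          (∫⁻ ω, ∏ ℓ ∈ Finset.Icc 1 N, d ℓ ω ∂μ) ^ ((1:ℝ)/2)
        ≤ 1 * (∫⁻ ω, ∏ ℓ ∈ Finset.Icc 1 N, d ℓ ω ∂μ) ^ ((1:ℝ)/2) := by
          gcongr
          exact ENNReal.rpow_le_one (hI N le_rfl) (by norm_num)
      _ = (∫⁻ ω, ∏ ℓ ∈ Finset.Icc 1 N, d ℓ ω ∂μ) ^ ((1:ℝ)/2) := one_mul _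
  -- nonnegativity facts
  have hc0 : ∀ᵐ ω ∂μ, ∀ ℓ ∈ Finset.Icc 1 N, 0 ≤ c ℓ ω := by
    rw [Filter.eventually_all_finset]
    intro ℓ hℓ
    exact condExp_nonneg (Filter.Eventually.of_forall fun ω => pow_nonneg (hξ_nonneg _ _) _)
  have hprodc0 : 0 ≤ᵐ[μ] fun ω => ∏ ℓ ∈ Finset.Icc 1 N, c ℓ ω := by
    filter_upwards [hc0] with ω hω
    exact Finset.prod_nonneg hω
  -- express both sides via lintegrals
  have hLHS : ∫ ω, ∏ ℓ ∈ Finset.Icc 1 N, ξ ℓ ω ^ p ∂μ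
      = (∫⁻ ω, ∏ ℓ ∈ Finset.Icc 1 N, ENNReal.ofReal (ξ ℓ ω ^ p) ∂μ).toReal := by
    rw [integral_eq_lintegral_of_nonneg_ae
      (Filter.Eventually.of_forall fun ω => Finset.prod_nonneg fun ℓ _ =>
        pow_nonneg (hξ_nonneg _ _) _) hint₁.aestronglyMeasurable]
    congr 1
    exact lintegral_congr fun ω =>
      ENNReal.ofReal_prod_of_nonneg fun ℓ _ => pow_nonneg (hξ_nonneg _ _) _
  have hRHSlin : ∫⁻ ω, ENNReal.ofReal (∏ ℓ ∈ Finset.Icc 1 N, c ℓ ω) ∂μ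
      = ∫⁻ ω, ∏ ℓ ∈ Finset.Icc 1 N, d ℓ ω ∂μ := by
    refine lintegral_congr_ae ?_
    filter_upwards [hc0] with ω hω
    exact ENNReal.ofReal_prod_of_nonneg hω
  have hRHS : ∫ ω, ∏ ℓ ∈ Finset.Icc 1 N, c ℓ ω ∂μ
      = (∫⁻ ω, ∏ ℓ ∈ Finset.Icc 1 N, d ℓ ω ∂μ).toReal := by
    rw [integral_eq_lintegral_of_nonneg_ae hprodc0 hint₃.aestronglyMeasurable, hRHSlin]
  have hDfin : ∫⁻ ω, ∏ ℓ ∈ Finset.Icc 1 N, d ℓ ω ∂μ ≠ ⊤ := by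
    rw [← hRHSlin]
    exact hint₃.lintegral_lt_top.ne
  rw [hLHS, show (fun ω => ∏ ℓ ∈ Finset.Icc 1 N,
      (μ[fun ω' => ξ ℓ ω' ^ (2 * p)|ℱ (ℓ - 1)]) ω) = fun ω => ∏ ℓ ∈ Finset.Icc 1 N, c ℓ ω
      from rfl, hRHS, Real.sqrt_eq_rpow, ENNReal.toReal_rpow]
  apply ENNReal.toReal_mono
  · exact (ENNReal.rpow_lt_top_of_nonneg (by norm_num) hDfin).ne
  · exact hCS'
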